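/- Assume additionally that μ_j > 0 for all 0 ≤ j ≤ d−2. Then there exists a density matrix ρ on ℂ^d with S(O(ρ)) − S(O^c(ρ)) > 0; that is, the channel coherent information Q^{(1)}(O) is strictly positive. -/
import Mathlib

open Matrix ComplexOrder

/-- Von Neumann entropy (base-2) of a matrix: −∑ λᵢ log₂ λᵢ over its eigenvalues
(0 if the matrix is not Hermitian). -/
noncomputable def vnEntropy {n : ℕ} (ρ : Matrix (Fin n) (Fin n) ℂ) : ℝ :=
  if h : ρ.IsHermitian then -∑ i, (h.eigenvalues i) * Real.logb 2 (h.eigenvalues i) else 0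

/-- The basis ket |i⟩ of ℂ^d (zero if out of range). -/
noncomputable def bket (d i : ℕ) : Fin d → ℂ := fun p => if (p : ℕ) = i then 1 else 0

/-- The projector |i⟩⟨i| on ℂ^d. -/
noncomputable def bproj (d i : ℕ) : Matrix (Fin d) (Fin d) ℂ :=
  Matrix.vecMulVec (bket d i) (star (bket d i))

/-- Kraus operator K_k = μ_k|k⟩⟨0| + |d−1⟩⟨k+1| of the channel O. -/
noncomputable def KrO (d : ℕ) (μ : ℕ → ℝ) (k : ℕ) : Matrix (Fin d) (Fin d) ℂ :=
  ((μ k : ℝ) : ℂ) • Matrix.vecMulVec (bket d k) (star (bket d 0)) +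
    Matrix.vecMulVec (bket d (d-1)) (star (bket d (k+1)))

/-- The channel O : M_d(ℂ) → M_d(ℂ) with parameters μ₀,…,μ_{d−2}. -/
noncomputable def chanO (d : ℕ) (μ : ℕ → ℝ) (X : Matrix (Fin d) (Fin d) ℂ) :
    Matrix (Fin d) (Fin d) ℂ :=
  ∑ k ∈ Finset.range (d - 1), KrO d μ k * X * (KrO d μ k)ᴴ

/-- Kraus operator L_j = μ_j|j⟩⟨0| of O^c, for 0 ≤ j ≤ d−2. -/
noncomputable def LrO (d : ℕ) (μ : ℕ → ℝ) (j : ℕ) : Matrix (Fin (d-1)) (Fin d) ℂ :=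
  ((μ j : ℝ) : ℂ) • Matrix.vecMulVec (bket (d-1) j) (star (bket d 0))

/-- Kraus operator L_{d−1} = ∑_{i=1}^{d−1}|i−1⟩⟨i| of O^c. -/
noncomputable def VrO (d : ℕ) : Matrix (Fin (d-1)) (Fin d) ℂ :=
  Matrix.of fun a b => if (b : ℕ) = (a : ℕ) + 1 then 1 else 0

/-- The complementary channel O^c : M_d(ℂ) → M_{d−1}(ℂ). -/
noncomputable def chanOc (d : ℕ) (μ : ℕ → ℝ) (X : Matrix (Fin d) (Fin d) ℂ) :
    Matrix (Fin (d-1)) (Fin (d-1)) ℂ :=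
  (∑ j ∈ Finset.range (d - 1), LrO d μ j * X * (LrO d μ j)ᴴ) + VrO d * X * (VrO d)ᴴ

/-! ### Auxiliary lemmas -/

open Polynomial in
lemma aux_charpoly_conj_units {n : Type*} [Fintype n] [DecidableEq n]
    (U B V : Matrix n n ℂ) (hUV : U * V = 1) :
    (U * B * V).charpoly = B.charpoly := by
  have hmapUV : U.map (C : ℂ →+* ℂ[X]) * V.map C = 1 := by
    rw [← Matrix.map_mul, hUV]; simp
  have hdiag : (Matrix.diagonal fun _ : n => (X : ℂ[X])) = (X : ℂ[X]) • (1 : Matrix n n ℂ[X]) := by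
    ext i j
    by_cases h : i = j <;> simp [h, Matrix.diagonal_apply, Matrix.one_apply]
  have hch : charmatrix (U * B * V) = U.map C * charmatrix B * V.map C := by
    rw [charmatrix, charmatrix]
    rw [mul_sub, sub_mul]
    congr 1
    · show (Matrix.diagonal fun _ : n => (X : ℂ[X])) =
        (U.map C * Matrix.diagonal fun _ : n => (X : ℂ[X])) * V.map C
      rw [hdiag, mul_smul_comm, smul_mul_assoc, mul_one, hmapUV]
    · simp [RingHom.mapMatrix_apply, Matrix.map_mul]
  rw [Matrix.charpoly, Matrix.charpoly, hch, Matrix.det_mul, Matrix.det_mul]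
  have h2 := Matrix.det_mul (U.map (C : ℂ →+* ℂ[X])) (V.map C)
  rw [hmapUV, Matrix.det_one] at h2
  linear_combination -B.charmatrix.det * h2

open Polynomial in
lemma aux_eig_multiset_diag {n : ℕ} (x : Fin n → ℝ)
    (h : (Matrix.diagonal (fun i => (x i : ℂ))).IsHermitian) :
    (Finset.univ.val.map (fun i => ((x i : ℂ)))) =
      (Finset.univ.val.map (fun i => ((h.eigenvalues i : ℂ)))) := by
  have hst := h.spectral_theorem
  set U := (Matrix.IsHermitian.eigenvectorUnitary h : Matrix (Fin n) (Fin n) ℂ)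
  have hUV : U * (star U) = 1 := h.eigenvectorUnitary.prop.2
  have hcp : (Matrix.diagonal (fun i => (x i : ℂ))).charpoly =
      (Matrix.diagonal (RCLike.ofReal ∘ h.eigenvalues) :
        Matrix (Fin n) (Fin n) ℂ).charpoly := by
    have := congrArg Matrix.charpoly hst
    rw [this]
    exact aux_charpoly_conj_units _ _ _ hUV
  have hd1 : (Matrix.diagonal (fun i => (x i : ℂ))).charpoly
      = ∏ i : Fin n, (X - C ((x i : ℂ))) := by
    rw [Matrix.charpoly_of_upperTriangular _ (Matrix.blockTriangular_diagonal _)]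
    simp
  have hd2 : (Matrix.diagonal (RCLike.ofReal ∘ h.eigenvalues) :
      Matrix (Fin n) (Fin n) ℂ).charpoly
      = ∏ i : Fin n, (X - C ((h.eigenvalues i : ℂ))) := by
    rw [Matrix.charpoly_of_upperTriangular _ (Matrix.blockTriangular_diagonal _)]
    simp [RCLike.ofReal]
  have key : ∏ i : Fin n, (X - C ((x i : ℂ)))
      = ∏ i : Fin n, (X - C ((h.eigenvalues i : ℂ))) := by
    rw [← hd1, ← hd2, hcp]
  have r1 := Polynomial.roots_multiset_prod_X_sub_C
    (Finset.univ.val.map (fun i : Fin n => ((x i : ℂ))))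
  have r2 := Polynomial.roots_multiset_prod_X_sub_C
    (Finset.univ.val.map (fun i : Fin n => ((h.eigenvalues i : ℂ))))
  rw [← r1, ← r2]
  congr 1
  rw [Multiset.map_map, Multiset.map_map]
  rw [Finset.prod_eq_multiset_prod, Finset.prod_eq_multiset_prod] at key
  simpa using key

lemma aux_sum_g_eig_diag {n : ℕ} (x : Fin n → ℝ)
    (h : (Matrix.diagonal (fun i => (x i : ℂ))).IsHermitian) (g : ℝ → ℝ) :
    ∑ i, g (h.eigenvalues i) = ∑ i, g (x i) := by
  have hm := aux_eig_multiset_diag x h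
  have h2 := congrArg (fun s : Multiset ℂ => (s.map (fun z => g z.re)).sum) hm
  simp only [Multiset.map_map, Function.comp] at h2
  simp only [Complex.ofReal_re] at h2
  rw [Finset.sum_eq_multiset_sum, Finset.sum_eq_multiset_sum]
  simpa using h2.symm

lemma aux_isHermitian_diag_real {n : ℕ} (x : Fin n → ℝ) :
    (Matrix.diagonal (fun i => (x i : ℂ))).IsHermitian := by
  have hs : (star fun i : Fin n => ((x i : ℂ))) = fun i => ((x i : ℂ)) := by
    funext i
    simp [Pi.star_apply, Complex.conj_ofReal]
  rw [Matrix.IsHermitian, Matrix.diagonal_conjTranspose, hs]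

lemma aux_vnEntropy_diag {n : ℕ} (x : Fin n → ℝ) :
    vnEntropy (Matrix.diagonal (fun i => (x i : ℂ)))
      = -∑ i, x i * Real.logb 2 (x i) := by
  rw [vnEntropy, dif_pos (aux_isHermitian_diag_real x)]
  rw [aux_sum_g_eig_diag x (aux_isHermitian_diag_real x) (fun t => t * Real.logb 2 t)]

/-! ### vecMulVec algebra -/

lemma aux_vmv_mul_vmv {l m n : Type*} [Fintype m] (u : l → ℂ) (v w : m → ℂ) (z : n → ℂ) :
    Matrix.vecMulVec u v * Matrix.vecMulVec w z = (v ⬝ᵥ w) • Matrix.vecMulVec u z := by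
  ext i j
  simp only [Matrix.mul_apply, Matrix.vecMulVec_apply, Matrix.smul_apply, dotProduct,
    smul_eq_mul]
  rw [Finset.sum_mul]
  exact Finset.sum_congr rfl (fun p _ => by ring)

lemma aux_conjT_vmv {m n : Type*} (u : m → ℂ) (v : n → ℂ) :
    (Matrix.vecMulVec u v)ᴴ = Matrix.vecMulVec (star v) (star u) := by
  ext i j
  simp [Matrix.conjTranspose_apply, Matrix.vecMulVec_apply, mul_comm]

lemma aux_mul_vmv {l m n : Type*} [Fintype m] (A : Matrix l m ℂ) (u : m → ℂ) (v : n → ℂ) :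
    A * Matrix.vecMulVec u v = Matrix.vecMulVec (A *ᵥ u) v := by
  ext i j
  simp only [Matrix.mul_apply, Matrix.vecMulVec_apply, Matrix.mulVec, dotProduct]
  rw [Finset.sum_mul]
  congr 1; funext p; ring

lemma aux_vmv_mul_conjT {l m n : Type*} [Fintype m] (u : l → ℂ) (v : m → ℂ)
    (A : Matrix n m ℂ) :
    Matrix.vecMulVec u (star v) * Aᴴ = Matrix.vecMulVec u (star (A *ᵥ v)) := by
  ext i j
  simp only [Matrix.mul_apply, Matrix.vecMulVec_apply, Matrix.conjTranspose_apply,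
    Matrix.mulVec, dotProduct, Pi.star_apply]
  rw [star_sum, Finset.mul_sum]
  exact Finset.sum_congr rfl (fun p _ => by rw [star_mul']; ring)

lemma aux_fin_sum_ite {d : ℕ} (c : ℕ) (f : Fin d → ℂ) :
    ∑ p : Fin d, (if (p : ℕ) = c then f p else 0)
      = if h : c < d then f ⟨c, h⟩ else 0 := by
  split_ifs with h
  · rw [Finset.sum_eq_single (⟨c, h⟩ : Fin d)]
    · simp
    · intro b _ hb
      rw [if_neg]
      intro hbc
      exact hb (Fin.ext hbc)
    · simp
  · apply Finset.sum_eq_zero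
    intro p _
    rw [if_neg]
    intro hp
    exact h (hp ▸ p.isLt)

lemma aux_sdot (d i j : ℕ) :
    star (bket d i) ⬝ᵥ bket d j = if i = j ∧ j < d then (1 : ℂ) else 0 := by
  have : ∀ p : Fin d, (star (bket d i)) p * bket d j p
      = if (p : ℕ) = j then (if i = j then (1:ℂ) else 0) else 0 := by
    intro p
    simp only [Pi.star_apply, bket]
    split_ifs <;> simp_all
  rw [dotProduct, Finset.sum_congr rfl (fun p _ => this p), aux_fin_sum_ite]
  split_ifs <;> simp_all

lemma aux_bproj_apply (d k : ℕ) (i j : Fin d) :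
    bproj d k i j = if (i : ℕ) = k ∧ (j : ℕ) = k then (1 : ℂ) else 0 := by
  simp only [bproj, Matrix.vecMulVec_apply, bket, Pi.star_apply]
  split_ifs <;> simp_all

lemma aux_KrO_term (d : ℕ) (hd : 3 ≤ d) (μ : ℕ → ℝ) (k : ℕ) (hk : k < d - 1) :
    KrO d μ k * ((1/2 : ℂ) • (bproj d 0 + bproj d (d-1))) * (KrO d μ k)ᴴ
      = (((μ k)^2 / 2 : ℝ) : ℂ) • bproj d k
        + (if k = d - 2 then (((1:ℝ)/2 : ℝ) : ℂ) else 0) • bproj d (d-1) := by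
  simp only [KrO, bproj, conjTranspose_add, conjTranspose_smul, aux_conjT_vmv, star_star,
    Matrix.add_mul, Matrix.mul_add, smul_mul_assoc, mul_smul_comm, aux_vmv_mul_vmv,
    smul_smul, aux_sdot,
    (show (0:ℕ) < d from by omega), (show ¬((0:ℕ) = d-1) from by omega),
    (show ¬((0:ℕ) = k+1) from by omega), (show (d-1:ℕ) < d from by omega),
    (show ¬((d:ℕ)-1 = 0) from by omega), (show (k+1) < d from by omega),
    (show ((d:ℕ)-1 = k+1) ↔ (k = d-2) from by omega),
    true_and, and_true, false_and, and_false, if_true, if_false,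
    one_mul, mul_one, zero_mul, mul_zero, zero_smul, smul_zero, add_zero, zero_add]
  simp only [RCLike.star_def, Complex.conj_ofReal]
  by_cases hk2 : k = d - 2
  · simp only [hk2, if_true, ite_true, if_pos (rfl : d - 2 = d - 2)]
    match_scalars <;> push_cast <;> ring_nf <;>
      simp [show (1:ℕ) + (d-2) = d-1 from by omega]
  · simp only [if_neg hk2, zero_smul, add_zero, mul_zero, smul_zero]
    match_scalars <;> push_cast <;> ring_nf

lemma aux_LrO_term (d : ℕ) (hd : 3 ≤ d) (μ : ℕ → ℝ) (j : ℕ) (hj : j < d - 1) :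
    LrO d μ j * ((1/2 : ℂ) • (bproj d 0 + bproj d (d-1))) * (LrO d μ j)ᴴ
      = (((μ j)^2 / 2 : ℝ) : ℂ) • bproj (d-1) j := by
  simp only [LrO, bproj, conjTranspose_smul, aux_conjT_vmv, star_star,
    Matrix.mul_add, Matrix.smul_mul, Matrix.mul_smul, aux_vmv_mul_vmv,
    smul_smul, aux_sdot,
    (show (0:ℕ) < d from by omega), (show ¬((0:ℕ) = d-1) from by omega),
    (show ¬((d:ℕ)-1 = 0) from by omega), (show (d-1:ℕ) < d from by omega),
    true_and, and_true, false_and, and_false, if_true, if_false,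
    one_mul, mul_one, zero_mul, mul_zero, zero_smul, smul_zero, add_zero, zero_add]
  simp only [RCLike.star_def, Complex.conj_ofReal]
  match_scalars <;> push_cast <;> ring_nf

lemma aux_V_mulVec_zero (d : ℕ) (hd : 3 ≤ d) : VrO d *ᵥ bket d 0 = 0 := by
  funext a
  simp only [Matrix.mulVec, dotProduct, VrO, bket, Matrix.of_apply, Pi.zero_apply]
  apply Finset.sum_eq_zero
  intro b _
  split_ifs <;> simp_all

lemma aux_V_mulVec_last (d : ℕ) (hd : 3 ≤ d) :
    VrO d *ᵥ bket d (d-1) = bket (d-1) (d-2) := by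
  funext a
  simp only [Matrix.mulVec, dotProduct, VrO, bket, Matrix.of_apply]
  have hstep : ∀ b : Fin d,
      (if (b : ℕ) = (a : ℕ) + 1 then (1:ℂ) else 0) * (if (b : ℕ) = d - 1 then (1:ℂ) else 0)
        = if (b : ℕ) = (a : ℕ) + 1 then (if (a : ℕ) + 1 = d - 1 then (1:ℂ) else 0) else 0 := by
    intro b
    split_ifs <;> simp_all
  rw [Finset.sum_congr rfl (fun b _ => hstep b), aux_fin_sum_ite]
  have ha : (a : ℕ) + 1 < d := by omega
  rw [dif_pos ha]
  have : ((a : ℕ) + 1 = d - 1) ↔ ((a : ℕ) = d - 2) := by omega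
  simp [this]

lemma aux_V_term (d : ℕ) (hd : 3 ≤ d) :
    VrO d * ((1/2 : ℂ) • (bproj d 0 + bproj d (d-1))) * (VrO d)ᴴ
      = (((1:ℝ)/2 : ℝ) : ℂ) • bproj (d-1) (d-2) := by
  have hz : ∀ w : Fin d → ℂ, Matrix.vecMulVec (0 : Fin (d-1) → ℂ) w
      = (0 : Matrix (Fin (d-1)) (Fin d) ℂ) := by
    intro w
    ext i j
    simp [Matrix.vecMulVec_apply]
  simp only [bproj, Matrix.mul_add, Matrix.add_mul, Matrix.mul_smul, Matrix.smul_mul,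
    aux_mul_vmv, aux_vmv_mul_conjT, aux_V_mulVec_zero d hd, aux_V_mulVec_last d hd, hz,
    Matrix.zero_mul, zero_add, add_zero]
  push_cast
  simp

/-- Diagonal entries of `chanO` applied to the test state. -/
noncomputable def wO (d : ℕ) (μ : ℕ → ℝ) : ℕ → ℝ :=
  fun k => if k = d - 1 then 1/2 else (μ k)^2/2

/-- Diagonal entries of `chanOc` applied to the test state. -/
noncomputable def wC (d : ℕ) (μ : ℕ → ℝ) : ℕ → ℝ :=
  fun k => if k = d - 2 then (μ (d-2))^2/2 + 1/2 else (μ k)^2/2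

lemma aux_chanO_eq (d : ℕ) (hd : 3 ≤ d) (μ : ℕ → ℝ) :
    chanO d μ ((1/2 : ℂ) • (bproj d 0 + bproj d (d-1)))
      = Matrix.diagonal (fun i : Fin d => ((wO d μ (i : ℕ) : ℝ) : ℂ)) := by
  rw [chanO,
    Finset.sum_congr rfl (fun k hk => aux_KrO_term d hd μ k (Finset.mem_range.1 hk)),
    Finset.sum_add_distrib]
  have h2 : (∑ k ∈ Finset.range (d-1),
      (if k = d - 2 then (((1:ℝ)/2 : ℝ) : ℂ) else 0) • bproj d (d-1))
      = (((1:ℝ)/2 : ℝ) : ℂ) • bproj d (d-1) := by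
    simp only [ite_smul, zero_smul]
    rw [Finset.sum_ite_eq' (Finset.range (d-1)) (d-2)
      (fun _ => (((1:ℝ)/2 : ℝ) : ℂ) • bproj d (d-1)),
      if_pos (Finset.mem_range.2 (by omega))]
  rw [h2]
  ext i j
  simp only [Matrix.add_apply, Matrix.sum_apply, Matrix.smul_apply, aux_bproj_apply,
    Matrix.diagonal_apply, smul_eq_mul, mul_ite, mul_one, mul_zero]
  by_cases hij : i = j
  · subst hij
    simp only [and_self, if_pos rfl]
    rw [Finset.sum_ite_eq (Finset.range (d-1)) ((i : ℕ))
      (fun k => (((μ k)^2/2 : ℝ) : ℂ))]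
    have hi : (i : ℕ) < d := i.isLt
    by_cases hlast : (i : ℕ) = d - 1
    · rw [if_neg (by simp only [Finset.mem_range]; omega)]
      simp only [wO, hlast, if_true, ite_true, if_pos rfl]
      push_cast
      ring
    · rw [if_pos (Finset.mem_range.2 (by omega))]
      simp only [wO, if_neg hlast]
      push_cast
      ring
  · have hne : (i : ℕ) ≠ (j : ℕ) := fun h => hij (Fin.ext h)
    rw [if_neg hij, Finset.sum_eq_zero, if_neg (by omega), add_zero]
    intro k _
    rw [if_neg (by omega)]

lemma aux_chanOc_eq (d : ℕ) (hd : 3 ≤ d) (μ : ℕ → ℝ) :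
    chanOc d μ ((1/2 : ℂ) • (bproj d 0 + bproj d (d-1)))
      = Matrix.diagonal (fun i : Fin (d-1) => ((wC d μ (i : ℕ) : ℝ) : ℂ)) := by
  rw [chanOc,
    Finset.sum_congr rfl (fun j hj => aux_LrO_term d hd μ j (Finset.mem_range.1 hj)),
    aux_V_term d hd]
  ext i j
  simp only [Matrix.add_apply, Matrix.sum_apply, Matrix.smul_apply, aux_bproj_apply,
    Matrix.diagonal_apply, smul_eq_mul, mul_ite, mul_one, mul_zero]
  by_cases hij : i = j
  · subst hij
    simp only [and_self, if_pos rfl]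
    rw [Finset.sum_ite_eq (Finset.range (d-1)) ((i : ℕ))
      (fun k => (((μ k)^2/2 : ℝ) : ℂ))]
    have hi : (i : ℕ) < d - 1 := i.isLt
    rw [if_pos (Finset.mem_range.2 hi)]
    by_cases hlast : (i : ℕ) = d - 2
    · simp only [wC, hlast, if_true, ite_true, if_pos rfl]
      push_cast
      ring
    · simp only [wC, if_neg hlast]
      push_cast
      ring
  · have hne : (i : ℕ) ≠ (j : ℕ) := fun h => hij (Fin.ext h)
    rw [if_neg hij, Finset.sum_eq_zero, if_neg (by omega), add_zero]
    intro k _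
    rw [if_neg (by omega)]

lemma aux_gineq {a b : ℝ} (ha : 0 < a) (hb : 0 < b) :
    a * Real.logb 2 a + b * Real.logb 2 b < (a + b) * Real.logb 2 (a + b) := by
  have h1 := Real.logb_lt_logb (b := 2) one_lt_two ha (by linarith : a < a + b)
  have h2 := Real.logb_lt_logb (b := 2) one_lt_two hb (by linarith : b < a + b)
  nlinarith

theorem stmt13 (d : ℕ) (hd : 3 ≤ d) (μ : ℕ → ℝ)
    (hμpos : ∀ j < d - 1, 0 < μ j)
    (hμsum : ∑ j ∈ Finset.range (d - 1), (μ j) ^ 2 = 1) :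
    ∃ ρ : Matrix (Fin d) (Fin d) ℂ, ρ.PosSemidef ∧ ρ.trace = 1 ∧
      0 < vnEntropy (chanO d μ ρ) - vnEntropy (chanOc d μ ρ) := by
  classical
  set v0 : Fin d → ℝ := fun i => if (i : ℕ) = 0 ∨ (i : ℕ) = d - 1 then 1/2 else 0 with hv0
  refine ⟨Matrix.diagonal (fun i => ((v0 i : ℝ) : ℂ)), ?_, ?_, ?_⟩
  · apply Matrix.PosSemidef.diagonal
    intro i
    simp only [hv0]
    split_ifs <;> simp [Complex.le_def]
  · rw [Matrix.trace_diagonal]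
    have : ∀ i : Fin d, ((v0 i : ℝ) : ℂ)
        = (if (i : ℕ) = 0 then (1/2 : ℂ) else 0) + (if (i : ℕ) = d - 1 then (1/2 : ℂ) else 0) := by
      intro i
      simp only [hv0]
      split_ifs <;> first | (exfalso; omega) | norm_num
    rw [Finset.sum_congr rfl (fun i _ => this i), Finset.sum_add_distrib]
    rw [Fin.sum_univ_eq_sum_range (fun k => if k = 0 then (1/2 : ℂ) else 0) d]
    rw [Fin.sum_univ_eq_sum_range (fun k => if k = d - 1 then (1/2 : ℂ) else 0) d]
    rw [Finset.sum_ite_eq' (Finset.range d) 0 (fun _ => (1/2 : ℂ)),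
      Finset.sum_ite_eq' (Finset.range d) (d-1) (fun _ => (1/2 : ℂ)),
      if_pos (Finset.mem_range.2 (by omega)), if_pos (Finset.mem_range.2 (by omega))]
    norm_num
  · have hρ2 : Matrix.diagonal (fun i => ((v0 i : ℝ) : ℂ))
        = (1/2 : ℂ) • (bproj d 0 + bproj d (d-1)) := by
      ext i j
      by_cases hij : i = j
      · subst hij
        simp only [Matrix.diagonal_apply_eq, Matrix.smul_apply, Matrix.add_apply,
          aux_bproj_apply, and_self, hv0, smul_eq_mul]
        split_ifs <;> first | (exfalso; omega) | (push_cast; ring) | norm_num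
      · have hne : (i : ℕ) ≠ (j : ℕ) := fun h => hij (Fin.ext h)
        simp only [Matrix.diagonal_apply_ne _ hij, Matrix.smul_apply, Matrix.add_apply,
          aux_bproj_apply, smul_eq_mul]
        rw [if_neg (fun h => hne ((h.1.trans h.2.symm : (i:ℕ) = (j:ℕ)))),
          if_neg (fun h => hne ((h.1.trans h.2.symm : (i:ℕ) = (j:ℕ))))]
        ring
    rw [hρ2, aux_chanO_eq d hd μ, aux_chanOc_eq d hd μ,
      aux_vnEntropy_diag (fun i : Fin d => wO d μ (i : ℕ)),
      aux_vnEntropy_diag (fun i : Fin (d-1) => wC d μ (i : ℕ))]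
    rw [Fin.sum_univ_eq_sum_range (fun k => wO d μ k * Real.logb 2 (wO d μ k)) d]
    rw [Fin.sum_univ_eq_sum_range (fun k => wC d μ k * Real.logb 2 (wC d μ k)) (d-1)]
    set F0 : ℕ → ℝ := fun k => wO d μ k * Real.logb 2 (wO d μ k) with hF0
    set F1 : ℕ → ℝ := fun k => wC d μ k * Real.logb 2 (wC d μ k) with hF1
    have e1 : ∑ k ∈ Finset.range d, F0 k
        = ∑ k ∈ Finset.range (d-1), F0 k + F0 (d-1) := by
      have h := Finset.sum_range_succ F0 (d-1)
      rw [show d - 1 + 1 = d from by omega] at h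
      exact h
    have e3 : ∑ k ∈ Finset.range (d-1), F0 k
        = ∑ k ∈ Finset.range (d-2), F0 k + F0 (d-2) := by
      have h := Finset.sum_range_succ F0 (d-2)
      rw [show d - 2 + 1 = d - 1 from by omega] at h
      exact h
    have e2 : ∑ k ∈ Finset.range (d-1), F1 k
        = ∑ k ∈ Finset.range (d-2), F1 k + F1 (d-2) := by
      have h := Finset.sum_range_succ F1 (d-2)
      rw [show d - 2 + 1 = d - 1 from by omega] at h
      exact h
    have e4 : ∑ k ∈ Finset.range (d-2), F0 k = ∑ k ∈ Finset.range (d-2), F1 k := by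
      apply Finset.sum_congr rfl
      intro k hk
      have hk2 : k < d - 2 := Finset.mem_range.1 hk
      simp only [hF0, hF1, wO, wC, if_neg (by omega : ¬(k = d - 1)),
        if_neg (by omega : ¬(k = d - 2))]
    set a : ℝ := (μ (d-2))^2/2 with ha
    have hF0last : F0 (d-1) = (1/2 : ℝ) * Real.logb 2 (1/2) := by
      simp [hF0, wO]
    have hF0mid : F0 (d-2) = a * Real.logb 2 a := by
      simp only [hF0, wO, ha, if_neg (by omega : ¬(d - 2 = d - 1))]
    have hF1mid : F1 (d-2) = (a + 1/2) * Real.logb 2 (a + 1/2) := by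
      simp [hF1, wC, ha]
    have hapos : 0 < a := by
      have := hμpos (d-2) (by omega)
      positivity
    have hkey := aux_gineq hapos (by norm_num : (0:ℝ) < 1/2)
    rw [e1, e3, e2, e4, hF0last, hF0mid, hF1mid]
    linarith
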